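/- (Multi-Insertion Lemma) Let Q = y_1 y_2 … y_s be a path in a digraph D (possibly s = 1) and let P = x_1 x_2 … x_t (t ≥ 2) be a path in D − V(Q). If Q has a collection of partners on P, then D contains an (x_1, x_t)-path with vertex set V(P) ∪ V(Q). -/

import Mathlib

open Finset

/-- A list of distinct vertices whose consecutive members are joined by arcs. -/
def IsPathList {V : Type*} (A : V → V → Prop) (p : List V) : Prop :=
  p.Nodup ∧ p.Chain' A

/-- A directed cycle: at least two distinct vertices, consecutive arcs, and an arc
from the last vertex back to the first. -/
def IsCycleList {V : Type*} (A : V → V → Prop) (c : List V) : Prop :=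
  2 ≤ c.length ∧ c.Nodup ∧ c.Chain' A ∧ ∀ h : c ≠ [], A (c.getLast h) (c.head h)

/-- A Hamiltonian bypass: a Hamiltonian path `v₁ v₂ … vₙ` together with the arc `v₁ vₙ`. -/
def HasHamBypass {V : Type*} (A : V → V → Prop) : Prop :=
  ∃ l : List V, l.Nodup ∧ (∀ v, v ∈ l) ∧ l.Chain' A ∧
    ∀ h : l ≠ [], A (l.head h) (l.getLast h)

/-- A Hamiltonian cycle. -/
def HasHamCycle {V : Type*} (A : V → V → Prop) : Prop :=
  ∃ c : List V, IsCycleList A c ∧ ∀ v, v ∈ c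

/-- out-degree of `x` towards a set `S`. -/
def outDegOn {V : Type*} [DecidableEq V] (A : V → V → Prop) [DecidableRel A]
    (x : V) (S : Finset V) : ℕ := (S.filter fun y => A x y).card

/-- in-degree of `x` from a set `S`. -/
def inDegOn {V : Type*} [DecidableEq V] (A : V → V → Prop) [DecidableRel A]
    (x : V) (S : Finset V) : ℕ := (S.filter fun y => A y x).card

/-- degree of `x` with respect to a set `S` (arcs in both directions). -/
def degOn {V : Type*} [DecidableEq V] (A : V → V → Prop) [DecidableRel A]
    (x : V) (S : Finset V) : ℕ := outDegOn A x S + inDegOn A x S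

/-- out-degree of `x`. -/
def outDeg {V : Type*} [Fintype V] [DecidableEq V] (A : V → V → Prop) [DecidableRel A]
    (x : V) : ℕ := outDegOn A x Finset.univ

/-- in-degree of `x`. -/
def inDeg {V : Type*} [Fintype V] [DecidableEq V] (A : V → V → Prop) [DecidableRel A]
    (x : V) : ℕ := inDegOn A x Finset.univ

/-- degree of `x`. -/
def deg {V : Type*} [Fintype V] [DecidableEq V] (A : V → V → Prop) [DecidableRel A]
    (x : V) : ℕ := outDeg A x + inDeg A x

/-- The condition `A_k` of Manoussakis: for every triple of distinct vertices `x, y, z`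
with `x` and `y` non-adjacent, if `xz` is not an arc then
`d(x)+d(y)+d⁺(x)+d⁻(z) ≥ 3n-2+k`, and if `zx` is not an arc then
`d(x)+d(y)+d⁻(x)+d⁺(z) ≥ 3n-2+k`. -/
def CondA {V : Type*} [Fintype V] [DecidableEq V] (A : V → V → Prop) [DecidableRel A]
    (k : ℤ) : Prop :=
  ∀ x y z : V, x ≠ y → z ≠ x → z ≠ y → ¬A x y → ¬A y x →
    (¬A x z → (deg A x + deg A y + outDeg A x + inDeg A z : ℤ) ≥
      3 * (Fintype.card V : ℤ) - 2 + k) ∧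
    (¬A z x → (deg A x + deg A y + inDeg A x + outDeg A z : ℤ) ≥
      3 * (Fintype.card V : ℤ) - 2 + k)


/-- The path `q` has a partner on the path `p`: an arc `p_i p_{i+1}` of `p` with
arcs from `p_i` to the first vertex of `q` and from the last vertex of `q` to
`p_{i+1}`. -/
def HasPartner {V : Type*} (A : V → V → Prop) (q p : List V) : Prop :=
  ∃ (hq : q ≠ []) (i : ℕ) (h : i + 1 < p.length),
    A (p.get ⟨i, Nat.lt_of_succ_lt h⟩) (q.head hq) ∧
    A (q.getLast hq) (p.get ⟨i + 1, h⟩)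

/-- `q` has a collection of partners on `p`: there are indices
`0 = i₁ < i₂ < ⋯ < i_m = q.length` such that each subpath of `q` between
consecutive indices has a partner on `p`. -/
def HasPartnerCollection {V : Type*} (A : V → V → Prop) (q p : List V) : Prop :=
  ∃ idx : List ℕ, idx.Chain' (· < ·) ∧ idx.head? = some 0 ∧
    idx.getLast? = some q.length ∧
    ∀ (j : ℕ) (h : j + 1 < idx.length),
      HasPartner A
        ((q.drop (idx.get ⟨j, Nat.lt_of_succ_lt h⟩)).take
          (idx.get ⟨j + 1, h⟩ - idx.get ⟨j, Nat.lt_of_succ_lt h⟩)) p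


section MultiInsertAux
open List
set_option linter.unusedSectionVars false
set_option maxHeartbeats 1000000
variable {V : Type*} [DecidableEq V] {A : V → V → Prop}



def PartnerAt (A : V → V → Prop) (i : ℕ) (s p : List V) : Prop :=
  ∃ (h : i + 1 < p.length) (a b : V), s.head? = some a ∧ s.getLast? = some b ∧
    A (p.get ⟨i, Nat.lt_of_succ_lt h⟩) a ∧ A b (p.get ⟨i + 1, h⟩)

lemma PartnerAt.tail {i : ℕ} {s : List V} {x : V} {ps : List V}
    (h : PartnerAt A i s (x :: ps)) (hi : i ≠ 0) : PartnerAt A (i - 1) s ps := by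
  obtain ⟨j, rfl⟩ : ∃ j, i = j + 1 := ⟨i - 1, by omega⟩
  obtain ⟨hl, a, b, ha, hb, h1, h2⟩ := h
  have hl' : j + 1 - 1 + 1 < ps.length := by
    simp only [List.length_cons] at hl; omega
  refine ⟨hl', a, b, ha, hb, ?_, ?_⟩
  · have e1 : (x :: ps).get ⟨j + 1, Nat.lt_of_succ_lt hl⟩
        = ps.get ⟨j, by simp only [List.length_cons] at hl; omega⟩ := get_cons_succ
    rw [e1] at h1
    convert h1 using 2; simp
  · have e2 : (x :: ps).get ⟨j + 1 + 1, hl⟩ = ps.get ⟨j + 1, by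
        simp only [List.length_cons] at hl; omega⟩ := get_cons_succ
    rw [e2] at h2
    convert h2 using 2; simp

lemma PartnerAt.head_arc {s : List V} {x : V} {ps : List V}
    (h : PartnerAt A 0 s (x :: ps)) :
    ∃ (a b : V), s.head? = some a ∧ s.getLast? = some b ∧ A x a ∧
      ∀ hps : ps ≠ [], A b (ps.head hps) := by
  obtain ⟨hl, a, b, ha, hb, h1, h2⟩ := h
  have hps : ps ≠ [] := by
    simp only [List.length_cons] at hl
    exact ne_nil_of_length_pos (by omega)
  refine ⟨a, b, ha, hb, h1, fun _ => ?_⟩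
  have e : (x :: ps).get ⟨1, hl⟩ = ps.get ⟨0, by
      simp only [List.length_cons] at hl; omega⟩ := get_cons_succ
  rw [e, get_mk_zero] at h2
  exact h2

lemma insAll : ∀ (p : List V) (L : List (ℕ × List V)),
    p.Nodup → p.Chain' A → p ≠ [] →
    (∀ x ∈ L, (x.2).Chain' A) →
    ((L.map Prod.snd).flatten).Nodup →
    (∀ v ∈ (L.map Prod.snd).flatten, v ∉ p) →
    (L.map Prod.fst).Nodup →
    (∀ x ∈ L, PartnerAt A x.1 x.2 p) →
    ∃ r : List V, r.Nodup ∧ r.Chain' A ∧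
      r.toFinset = p.toFinset ∪ ((L.map Prod.snd).flatten).toFinset ∧
      r.head? = p.head? ∧ r.getLast? = p.getLast? := by
  intro p
  induction p with
  | nil => intro L _ _ h; exact absurd rfl h
  | cons x ps IH =>
    intro L hpN hpC _ hC hN hD hF hP
    by_cases hL : L = []
    · subst hL
      exact ⟨x :: ps, hpN, hpC, by simp, rfl, rfl⟩
    -- L nonempty, hence ps ≠ []
    have hps : ps ≠ [] := by
      obtain ⟨e, heL⟩ := exists_mem_of_ne_nil L hL
      obtain ⟨hl, -⟩ := hP e heL
      simp only [List.length_cons] at hl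
      exact ne_nil_of_length_pos (by omega)
    have hpsN : ps.Nodup := (List.nodup_cons.mp hpN).2
    have hxps : x ∉ ps := (List.nodup_cons.mp hpN).1
    have hpsC : ps.Chain' A := hpC.tail
    by_cases h0 : (0 : ℕ) ∈ L.map Prod.fst
    · -- some segment is inserted at the first arc
      obtain ⟨e₀, he₀L, he₀⟩ := List.mem_map.mp h0
      obtain ⟨X, Y, hXY⟩ := append_of_mem he₀L
      obtain ⟨a, b, ha, hb, hxa, hbp⟩ :=
        PartnerAt.head_arc (A := A) (by
          have := hP e₀ he₀L
          rwa [he₀] at this)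
      have hsne : e₀.2 ≠ [] := by rintro h; rw [h] at ha; simp at ha
      have hJ : (L.map Prod.snd).flatten
          = (X.map Prod.snd).flatten ++ (e₀.2 ++ (Y.map Prod.snd).flatten) := by
        rw [hXY]; simp
      have hfst0 : (0 : ℕ) ∉ (X ++ Y).map Prod.fst := by
        have : (L.map Prod.fst).Nodup := hF
        rw [hXY] at this
        simp only [List.map_append, List.map_cons, he₀] at this
        have h2 := (List.nodup_cons.mp (List.nodup_middle.mp this)).1
        simpa using h2
      set L' : List (ℕ × List V) := (X ++ Y).map (fun e => (e.1 - 1, e.2)) with hL'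
      have hsnd : L'.map Prod.snd = (X ++ Y).map Prod.snd := by
        rw [hL', List.map_map]; rfl
      have hmemL' : ∀ y ∈ L', ∃ e ∈ X ++ Y, y = (e.1 - 1, e.2) := by
        intro y hy
        obtain ⟨e, he, rfl⟩ := List.mem_map.mp hy
        exact ⟨e, he, rfl⟩
      have hmemL : ∀ e ∈ X ++ Y, e ∈ L := by
        intro e he
        rw [hXY]
        rcases List.mem_append.mp he with h | h
        · exact mem_append_left _ h
        · exact mem_append_right _ (mem_cons_of_mem _ h)
      have hJ' : (L'.map Prod.snd).flatten
          = (X.map Prod.snd).flatten ++ (Y.map Prod.snd).flatten := by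
        rw [hsnd]; simp
      have hsub : (L'.map Prod.snd).flatten <+ (L.map Prod.snd).flatten := by
        rw [hJ, hJ']
        exact Sublist.append (Sublist.refl _) (sublist_append_right _ _)
      obtain ⟨r', hrN, hrC, hrF, hrH, hrL⟩ := IH L' hpsN hpsC hps
        (by
          intro y hy
          obtain ⟨e, he, rfl⟩ := hmemL' y hy
          exact hC e (hmemL e he))
        (hN.sublist hsub)
        (by
          intro v hv
          exact fun hvps => hD v (hsub.mem hv) (mem_cons_of_mem _ hvps))
        (by
          have : L'.map Prod.fst = ((X ++ Y).map Prod.fst).map (· - 1) := by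
            simp [hL', List.map_map, Function.comp_def]
          rw [this]
          refine Nodup.map_on ?_ ?_
          · intro c hc d hd hcd
            have hc0 : c ≠ 0 := fun h => hfst0 (h ▸ hc)
            have hd0 : d ≠ 0 := fun h => hfst0 (h ▸ hd)
            omega
          · have : (L.map Prod.fst).Nodup := hF
            rw [hXY] at this
            simp only [List.map_append, List.map_cons, he₀] at this
            have h2 := (List.nodup_cons.mp (List.nodup_middle.mp this)).2
            simpa using h2)
        (by
          intro y hy
          obtain ⟨e, he, rfl⟩ := hmemL' y hy
          have h1 : PartnerAt A e.1 e.2 (x :: ps) := hP e (hmemL e he)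
          have h2 : e.1 ≠ 0 := by
            intro h
            exact hfst0 (by simpa [← h] using List.mem_map_of_mem (f := Prod.fst) he)
          exact h1.tail h2)
      -- assemble
      have hr'H : r'.head? = some (ps.head hps) := by rw [hrH, head?_eq_head]
      have hr'ne : r' ≠ [] := by rintro rfl; simp at hr'H
      have hmem_r' : ∀ v, v ∈ r' ↔ v ∈ ps ∨ v ∈ (L'.map Prod.snd).flatten := by
        intro v
        rw [← List.mem_toFinset, hrF]
        simp
      have hsJ : ∀ v ∈ e₀.2, v ∈ (L.map Prod.snd).flatten := by
        intro v hv
        rw [hJ]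
        exact mem_append_right _ (mem_append_left _ hv)
      -- nodup pieces of J
      have hNJ : ((X.map Prod.snd).flatten ++ (e₀.2 ++ (Y.map Prod.snd).flatten)).Nodup := by
        rw [← hJ]; exact hN
      obtain ⟨hNX, hNsY, hdisjX⟩ := List.nodup_append.mp hNJ
      obtain ⟨hNs, hNY, hdisjsY⟩ := List.nodup_append.mp hNsY
      refine ⟨x :: (e₀.2 ++ r'), ?_, ?_, ?_, ?_, ?_⟩
      · -- Nodup
        rw [List.nodup_cons, List.mem_append, List.nodup_append]
        refine ⟨?_, hNs, hrN, ?_⟩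
        · rintro (hx | hx)
          · exact hD x (hsJ x hx) List.mem_cons_self
          · rcases (hmem_r' x).mp hx with h | h
            · exact hxps h
            · exact hD x (hsub.mem h) List.mem_cons_self
        · rintro v hv _ hv' rfl
          rcases (hmem_r' v).mp hv' with h | h
          · exact hD v (hsJ v hv) (mem_cons_of_mem _ h)
          · rw [hJ'] at h
            rcases List.mem_append.mp h with h | h
            · exact hdisjX v h v (mem_append_left _ hv) rfl
            · exact hdisjsY v hv v h rfl
      · -- Chain'
        show List.IsChain A _; rw [isChain_cons]
        constructor
        · intro y hy
          rw [head?_append, ha] at hy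
          simp only [Option.mem_def, Option.or_eq_some_iff, Option.some_inj] at hy
          rcases hy with hy | ⟨h', -⟩
          · exact hy ▸ hxa
          · exact absurd h' (by simp)
        · rw [isChain_append]
          refine ⟨hC e₀ he₀L, hrC, ?_⟩
          intro c hc d hd
          rw [hb, Option.mem_def, Option.some_inj] at hc
          rw [hr'H, Option.mem_def, Option.some_inj] at hd
          exact hc ▸ hd ▸ hbp hps
      · -- toFinset
        ext v
        simp only [List.toFinset_cons, List.toFinset_append, Finset.mem_insert, Finset.mem_union,
          List.mem_toFinset, hJ]
        have hv' := hmem_r' v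
        rw [hJ'] at hv'
        simp only [List.mem_append] at hv' ⊢
        rw [hv']
        tauto
      · rfl
      · -- getLast?
        have h1 : r'.getLast? = some (ps.getLast hps) := by
          rw [hrL, getLast?_eq_getLast]
        show ((x :: (e₀.2 ++ r'))).getLast? = (x :: ps).getLast?
        rw [show (x :: (e₀.2 ++ r')) = [x] ++ (e₀.2 ++ r') by rfl,
          show (x :: ps) = [x] ++ ps by rfl,
          getLast?_append, getLast?_append, getLast?_append, h1,
          getLast?_eq_getLast hps]
        rfl
    · -- no segment at the first arc
      set L' : List (ℕ × List V) := L.map (fun e => (e.1 - 1, e.2)) with hL'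
      have hsnd : L'.map Prod.snd = L.map Prod.snd := by
        rw [hL', List.map_map]; rfl
      have hmemL' : ∀ y ∈ L', ∃ e ∈ L, y = (e.1 - 1, e.2) := by
        intro y hy
        obtain ⟨e, he, rfl⟩ := List.mem_map.mp hy
        exact ⟨e, he, rfl⟩
      obtain ⟨r', hrN, hrC, hrF, hrH, hrL⟩ := IH L' hpsN hpsC hps
        (by
          intro y hy
          obtain ⟨e, he, rfl⟩ := hmemL' y hy
          exact hC e he)
        (by rw [hsnd]; exact hN)
        (by
          rw [hsnd]
          intro v hv hvps
          exact hD v hv (mem_cons_of_mem _ hvps))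
        (by
          have : L'.map Prod.fst = (L.map Prod.fst).map (· - 1) := by
            simp [hL', List.map_map, Function.comp_def]
          rw [this]
          refine Nodup.map_on ?_ hF
          intro c hc d hd hcd
          have hc0 : c ≠ 0 := fun h => h0 (h ▸ hc)
          have hd0 : d ≠ 0 := fun h => h0 (h ▸ hd)
          omega)
        (by
          intro y hy
          obtain ⟨e, he, rfl⟩ := hmemL' y hy
          have h2 : e.1 ≠ 0 := by
            intro h
            exact h0 (by simpa [← h] using List.mem_map_of_mem (f := Prod.fst) he)
          exact (hP e he).tail h2)
      have hr'H : r'.head? = some (ps.head hps) := by rw [hrH, head?_eq_head]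
      have hr'ne : r' ≠ [] := by rintro rfl; simp at hr'H
      have hmem_r' : ∀ v, v ∈ r' ↔ v ∈ ps ∨ v ∈ (L.map Prod.snd).flatten := by
        intro v
        rw [← List.mem_toFinset, hrF, hsnd]
        simp
      refine ⟨x :: r', ?_, ?_, ?_, ?_, ?_⟩
      · rw [List.nodup_cons]
        refine ⟨?_, hrN⟩
        intro hx
        rcases (hmem_r' x).mp hx with h | h
        · exact hxps h
        · exact hD x h List.mem_cons_self
      · show List.IsChain A _; rw [isChain_cons]
        refine ⟨?_, hrC⟩
        intro y hy
        rw [hr'H, Option.mem_def, Option.some_inj] at hy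
        have h2 := (isChain_cons.mp hpC).1 (ps.head hps)
          (by rw [head?_eq_head hps]; rfl)
        exact hy ▸ h2
      · ext v
        simp only [List.toFinset_cons, Finset.mem_insert, Finset.mem_union, List.mem_toFinset]
        rw [hmem_r' v]
        tauto
      · rfl
      · have h1 : r'.getLast? = some (ps.getLast hps) := by
          rw [hrL, getLast?_eq_getLast]
        show (x :: r').getLast? = (x :: ps).getLast?
        rw [show (x :: r') = [x] ++ r' by rfl, show (x :: ps) = [x] ++ ps by rfl,
          getLast?_append, getLast?_append, h1, getLast?_eq_getLast hps]



lemma hasPartner_iff {q p : List V} :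
    HasPartner A q p ↔ ∃ i, PartnerAt A i q p := by
  constructor
  · rintro ⟨hq, i, h, h1, h2⟩
    exact ⟨i, h, _, _, head?_eq_head hq, getLast?_eq_getLast hq, h1, h2⟩
  · rintro ⟨i, h, a, b, ha, hb, h1, h2⟩
    have hq : q ≠ [] := by rintro rfl; simp at ha
    rw [head?_eq_head hq, Option.some_inj] at ha
    rw [getLast?_eq_getLast hq, Option.some_inj] at hb
    exact ⟨hq, i, h, ha ▸ h1, hb ▸ h2⟩

lemma seglist (p : List V) : ∀ (idx : List ℕ) (q : List V) (n : ℕ),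
    idx.Chain' (· < ·) → idx.head? = some n → idx.getLast? = some (n + q.length) →
    (∀ (j : ℕ) (h : j + 1 < idx.length),
      HasPartner A ((q.drop (idx.get ⟨j, Nat.lt_of_succ_lt h⟩ - n)).take
        (idx.get ⟨j+1, h⟩ - idx.get ⟨j, Nat.lt_of_succ_lt h⟩)) p) →
    ∃ segs : List (List V), segs.flatten = q ∧ ∀ s ∈ segs, HasPartner A s p := by
  intro idx
  induction idx with
  | nil => intro q n _ h; simp at h
  | cons n₀ rest ih =>
    intro q n hchain hhead hlast hpart
    obtain rfl : n₀ = n := by simpa using hhead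
    cases rest with
    | nil =>
      have hq0 : q.length = 0 := by
        have : n₀ = n₀ + q.length := by simpa using hlast
        omega
      refine ⟨[], by simpa using (List.length_eq_zero_iff.mp hq0).symm, by simp⟩
    | cons m rest' =>
      have hnm : n₀ < m := (isChain_cons_cons.mp hchain).1
      have hchain' : (m :: rest').Chain' (· < ·) := (isChain_cons_cons.mp hchain).2
      have hpw : (m :: rest').Pairwise (· < ·) := isChain_iff_pairwise.mp hchain'
      have hge : ∀ x ∈ m :: rest', m ≤ x := by
        intro x hx
        rcases List.mem_cons.mp hx with rfl | hx
        · exact le_refl _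
        · exact le_of_lt ((pairwise_cons.mp hpw).1 x hx)
      have hlast' : (m :: rest').getLast? = some (n₀ + q.length) := by
        rw [← hlast]; rfl
      have hmle : m ≤ n₀ + q.length := by
        have h1 : (m :: rest').getLast (by simp) ∈ m :: rest' := getLast_mem _
        have h2 : (m :: rest').getLast? = some ((m :: rest').getLast (by simp)) :=
          getLast?_eq_getLast _
        rw [hlast', Option.some_inj] at h2
        exact h2 ▸ hge _ h1
      have hdle : m - n₀ ≤ q.length := by omega
      have hseg0 : HasPartner A (q.take (m - n₀)) p := by
        have := hpart 0 (by simp)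
        simpa using this
      obtain ⟨segs', hjoin', hpart'⟩ := ih (q.drop (m - n₀)) m hchain' rfl
        (by
          rw [hlast', Option.some_inj]
          simp only [length_drop]
          omega)
        (by
          intro j h
          have h2 : j + 2 < (n₀ :: m :: rest').length := by simpa using Nat.succ_lt_succ h
          have hthis := hpart (j+1) h2
          have e1 : (n₀ :: m :: rest').get ⟨j+1, Nat.lt_of_succ_lt h2⟩
              = (m :: rest').get ⟨j, Nat.lt_of_succ_lt h⟩ := get_cons_succ
          have e2 : (n₀ :: m :: rest').get ⟨j+1+1, h2⟩ = (m :: rest').get ⟨j+1, h⟩ :=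
            get_cons_succ
          rw [e1, e2] at hthis
          have hmem : (m :: rest').get ⟨j, Nat.lt_of_succ_lt h⟩ ∈ m :: rest' :=
            get_mem _ _
          have hgem : m ≤ (m :: rest').get ⟨j, Nat.lt_of_succ_lt h⟩ := hge _ hmem
          have e3 : (q.drop (m - n₀)).drop ((m :: rest').get ⟨j, Nat.lt_of_succ_lt h⟩ - m)
              = q.drop ((m :: rest').get ⟨j, Nat.lt_of_succ_lt h⟩ - n₀) := by
            rw [drop_drop]; congr 1; omega
          rwa [e3])
      refine ⟨q.take (m - n₀) :: segs', ?_, ?_⟩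
      · simp only [flatten_cons, hjoin', take_append_drop]
      · intro s hs
        rcases List.mem_cons.mp hs with rfl | hs
        · exact hseg0
        · exact hpart' s hs

lemma mergeArcs (p : List V) : ∀ (N : ℕ) (L : List (ℕ × List V)), L.length ≤ N →
    (∀ x ∈ L, PartnerAt A x.1 x.2 p) →
    ∃ L' : List (ℕ × List V),
      (L'.map Prod.snd).flatten = (L.map Prod.snd).flatten ∧
      (L'.map Prod.fst).Nodup ∧
      (∀ a ∈ L'.map Prod.fst, a ∈ L.map Prod.fst) ∧
      ∀ x ∈ L', PartnerAt A x.1 x.2 p := by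
  intro N
  induction N with
  | zero =>
    intro L hlen _
    have : L = [] := length_eq_zero_iff.mp (Nat.le_zero.mp hlen)
    subst this
    exact ⟨[], rfl, by simp, by simp, by simp⟩
  | succ N ih =>
    intro L hlen hpart
    cases L with
    | nil => exact ⟨[], rfl, by simp, by simp, by simp⟩
    | cons e T =>
      obtain ⟨a, s⟩ := e
      by_cases ha : a ∈ T.map Prod.fst
      · -- duplicate arc: merge
        obtain ⟨e', he'T, he'1⟩ := List.mem_map.mp ha
        obtain ⟨Y, Z, hTYZ⟩ := append_of_mem he'T
        have hlen1 : (((a, s ++ ((Y.map Prod.snd).flatten ++ e'.2)) : ℕ × List V) :: Z).length ≤ N := by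
          have := hlen
          rw [hTYZ] at this
          simp only [List.length_cons, length_append] at this ⊢
          omega
        have hps : PartnerAt A a s p := hpart (a, s) List.mem_cons_self
        have hpe : PartnerAt A a e'.2 p := by
          have := hpart e' (mem_cons_of_mem _ (hTYZ ▸ mem_append_right Y List.mem_cons_self))
          rwa [he'1] at this
        obtain ⟨hl, a1, b1, ha1, hb1, hA1, hB1⟩ := hps
        obtain ⟨hl', a2, b2, ha2, hb2, hA2, hB2⟩ := hpe
        have hmerged : PartnerAt A a (s ++ ((Y.map Prod.snd).flatten ++ e'.2)) p := by
          refine ⟨hl, a1, b2, ?_, ?_, hA1, hB2⟩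
          · rw [head?_append, ha1]; rfl
          · rw [getLast?_append, getLast?_append, hb2]; rfl
        obtain ⟨L', hj, hnd, hsub, hp'⟩ := ih ((a, s ++ ((Y.map Prod.snd).flatten ++ e'.2)) :: Z)
          hlen1
          (by
            intro x hx
            rcases List.mem_cons.mp hx with rfl | hx
            · exact hmerged
            · exact hpart x (mem_cons_of_mem _ (hTYZ ▸ mem_append_right Y (mem_cons_of_mem _ hx))))
        refine ⟨L', ?_, hnd, ?_, hp'⟩
        · rw [hj, hTYZ]
          simp [append_assoc]
        · intro b hb
          have := hsub b hb
          rw [hTYZ]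
          simp only [List.map_cons, List.map_append, List.mem_cons, List.mem_append] at this ⊢
          tauto
      · -- head arc fresh
        obtain ⟨T', hj, hnd, hsub, hp'⟩ := ih T (by simpa using Nat.le_of_succ_le_succ hlen)
          (fun x hx => hpart x (mem_cons_of_mem _ hx))
        refine ⟨(a, s) :: T', ?_, ?_, ?_, ?_⟩
        · simp only [List.map_cons, flatten_cons, hj]
        · simp only [List.map_cons, List.nodup_cons]
          exact ⟨fun hmem => ha (hsub a hmem), hnd⟩
        · intro b hb
          simp only [List.map_cons, List.mem_cons] at hb ⊢
          rcases hb with rfl | hb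
          · left; rfl
          · right; exact hsub b hb
        · intro x hx
          rcases List.mem_cons.mp hx with rfl | hx
          · exact hpart (a, s) List.mem_cons_self
          · exact hp' x hx

end MultiInsertAux

/-- Multi-Insertion Lemma. -/
theorem stmt6 {V : Type*} [DecidableEq V] (A : V → V → Prop)
    (q : List V) (hq : IsPathList A q) (hs : 1 ≤ q.length)
    (p : List V) (hp : IsPathList A p) (ht : 2 ≤ p.length)
    (hdisj : ∀ v ∈ q, v ∉ p)
    (hcoll : HasPartnerCollection A q p) :
    ∃ r : List V, IsPathList A r ∧ r.toFinset = p.toFinset ∪ q.toFinset ∧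
      r.head? = p.head? ∧ r.getLast? = p.getLast? := by
  classical
  obtain ⟨idx, hchain, hhead, hlast, hpartc⟩ := hcoll
  obtain ⟨segs, hflat, hparts⟩ := seglist (A := A) p idx q 0 hchain hhead
    (by simpa using hlast)
    (by
      intro j h
      have := hpartc j h
      simpa using this)
  have hex : ∀ s : List V, s ∈ segs → ∃ i, PartnerAt A i s p :=
    fun s hs => hasPartner_iff.mp (hparts s hs)
  set L₀ : List (ℕ × List V) :=
    segs.map (fun s => (if h : ∃ i, PartnerAt A i s p then h.choose else 0, s)) with hL₀
  have hsnd₀ : L₀.map Prod.snd = segs := by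
    simp [hL₀, List.map_map, Function.comp_def]
  have hpart₀ : ∀ x ∈ L₀, PartnerAt A x.1 x.2 p := by
    intro x hx
    obtain ⟨s, hs, rfl⟩ := List.mem_map.mp hx
    simp only [dif_pos (hex s hs)]
    exact (hex s hs).choose_spec
  obtain ⟨L', hflat', hndfst, -, hpart'⟩ :=
    mergeArcs (A := A) p L₀.length L₀ le_rfl hpart₀
  have hflatq : (L'.map Prod.snd).flatten = q := by
    rw [hflat', hsnd₀, hflat]
  have hpne : p ≠ [] := List.ne_nil_of_length_pos (by omega)
  obtain ⟨r, hrN, hrC, hrF, hrH, hrL⟩ := insAll (A := A) p L' hp.1 hp.2 hpne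
    (by
      intro x hx
      have hinf : x.2 <:+: (L'.map Prod.snd).flatten :=
        List.infix_of_mem_flatten (List.mem_map_of_mem (f := Prod.snd) hx)
      rw [hflatq] at hinf
      exact hq.2.infix hinf)
    (by rw [hflatq]; exact hq.1)
    (by rw [hflatq]; exact hdisj)
    hndfst hpart'
  refine ⟨r, ⟨hrN, hrC⟩, ?_, hrH, hrL⟩
  rw [hrF, hflatq]
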